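/- Let k be a field and S = k[[x,u]]/(u^2). For i ∈ ℕ let X_i be the ideal (x^i, u) of S, X_0 = S, and X_∞ = (u). Then each X_i with i ∈ ℕ ∪ {∞} is an indecomposable S-module, and X_i ≇ X_j for i ≠ j in ℕ ∪ {∞}. -/

import Mathlib

set_option synthInstance.maxHeartbeats 400000

open MvPowerSeries

/-- The `A_∞` curve singularity `S = k[[x,u]]/(u²)`. -/
abbrev Sring (k : Type*) [Field k] : Type _ :=
  MvPowerSeries (Fin 2) k ⧸ Ideal.span {(X 1 : MvPowerSeries (Fin 2) k) ^ 2}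

/-- The class of `x` in `S`. -/
noncomputable def Sx (k : Type*) [Field k] : Sring k :=
  Ideal.Quotient.mk _ (X 0)

/-- The class of `u` in `S`. -/
noncomputable def Su (k : Type*) [Field k] : Sring k :=
  Ideal.Quotient.mk _ (X 1)

/-- The ideals `X_i ⊆ S` for `i ∈ ℕ ∪ {∞}`: `X_i = (x^i, u)` for `i ∈ ℕ`
(so `X_0 = S`) and `X_∞ = (u)`. -/
noncomputable def Xideal (k : Type*) [Field k] : ℕ∞ → Ideal (Sring k) :=
  WithTop.recTopCoe (Ideal.span {Su k}) (fun i => Ideal.span {(Sx k) ^ i, Su k})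

/-- A module is indecomposable if it is nonzero and is not the (internal) direct sum of two
nonzero submodules. -/
def IsIndecomposableModule (R M : Type*) [Ring R] [AddCommGroup M] [Module R M] : Prop :=
  (∃ x : M, x ≠ 0) ∧ ∀ N₁ N₂ : Submodule R M, IsCompl N₁ N₂ → N₁ = ⊥ ∨ N₂ = ⊥

noncomputable section AInfSec
namespace AInf

variable (k : Type*) [Field k]

/-! ### Exponents -/

/-- exponent `(n, m)` as a `Fin 2 →₀ ℕ`. -/
def ee (n m : ℕ) : Fin 2 →₀ ℕ := Finsupp.single 0 n + Finsupp.single 1 m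

lemma ee_apply0 (n m : ℕ) : ee n m 0 = n := by
  simp [ee, Finsupp.single_apply]

lemma ee_apply1 (n m : ℕ) : ee n m 1 = m := by
  simp [ee, Finsupp.single_apply]

lemma ee_eq (d : Fin 2 →₀ ℕ) : ee (d 0) (d 1) = d := by
  ext i
  fin_cases i
  · exact ee_apply0 _ _
  · exact ee_apply1 _ _

lemma ee_eqzero_iff (n m : ℕ) : ee n m = 0 ↔ n = 0 ∧ m = 0 := by
  constructor
  · intro h
    constructor
    · have := congrArg (fun f => f 0) h; simpa [ee_apply0] using this
    · have := congrArg (fun f => f 1) h; simpa [ee_apply1] using this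
  · rintro ⟨rfl, rfl⟩; simp [ee]

lemma sum_antidiagonal_ee {M : Type*} [AddCommMonoid M] (n m : ℕ)
    (F : (Fin 2 →₀ ℕ) → (Fin 2 →₀ ℕ) → M) :
    ∑ p ∈ Finset.HasAntidiagonal.antidiagonal (ee n m), F p.1 p.2 =
    ∑ a ∈ Finset.HasAntidiagonal.antidiagonal n, ∑ b ∈ Finset.HasAntidiagonal.antidiagonal m, F (ee a.1 b.1) (ee a.2 b.2) := by
  rw [← Finset.sum_product']
  refine Finset.sum_nbij' (fun p => ((p.1 0, p.2 0), (p.1 1, p.2 1)))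
    (fun q => (ee q.1.1 q.2.1, ee q.1.2 q.2.2)) ?_ ?_ ?_ ?_ ?_
  · rintro ⟨p₁, p₂⟩ hp
    rw [Finset.HasAntidiagonal.mem_antidiagonal] at hp
    have h0 : p₁ 0 + p₂ 0 = n := by
      have := congrArg (fun f => f 0) hp; simpa [ee_apply0] using this
    have h1 : p₁ 1 + p₂ 1 = m := by
      have := congrArg (fun f => f 1) hp; simpa [ee_apply1] using this
    simp [Finset.HasAntidiagonal.mem_antidiagonal, h0, h1]
  · rintro ⟨⟨a₁, a₂⟩, ⟨b₁, b₂⟩⟩ hq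
    simp only [Finset.mem_product, Finset.HasAntidiagonal.mem_antidiagonal] at hq
    rw [Finset.HasAntidiagonal.mem_antidiagonal]
    ext i
    fin_cases i
    · simpa [ee_apply0] using hq.1
    · simpa [ee_apply1] using hq.2
  · rintro ⟨p₁, p₂⟩ _
    simp [ee_eq]
  · rintro ⟨⟨a₁, a₂⟩, ⟨b₁, b₂⟩⟩ _
    simp [ee_apply0, ee_apply1]
  · rintro ⟨p₁, p₂⟩ _
    simp [ee_eq]

/-! ### The coefficient-extraction ring homomorphism into dual numbers over `k[[X]]` -/

def fRaw (h : MvPowerSeries (Fin 2) k) : PowerSeries k :=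
  PowerSeries.mk fun n => MvPowerSeries.coeff (ee n 0) h

def gRaw (h : MvPowerSeries (Fin 2) k) : PowerSeries k :=
  PowerSeries.mk fun n => MvPowerSeries.coeff (ee n 1) h

abbrev E := TrivSqZeroExt (PowerSeries k) (PowerSeries k)

def Phi0 : MvPowerSeries (Fin 2) k →+* E k where
  toFun h := (fRaw k h, gRaw k h)
  map_one' := by
    refine TrivSqZeroExt.ext ?_ ?_
    · show fRaw k 1 = 1
      ext n
      simp only [fRaw, PowerSeries.coeff_mk]
      rw [MvPowerSeries.coeff_one]
      simp [ee_eqzero_iff, PowerSeries.coeff_one]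
    · show gRaw k 1 = 0
      ext n
      simp only [gRaw, PowerSeries.coeff_mk]
      rw [MvPowerSeries.coeff_one]
      simp [ee_eqzero_iff]
  map_mul' a b := by
    refine TrivSqZeroExt.ext ?_ ?_
    · show fRaw k (a * b) = fRaw k a * fRaw k b
      ext n
      rw [PowerSeries.coeff_mul]
      simp only [fRaw, PowerSeries.coeff_mk, MvPowerSeries.coeff_mul]
      rw [sum_antidiagonal_ee n 0 (fun d₁ d₂ => (coeff d₁) a * (coeff d₂) b)]
      simp [PowerSeries.coeff_mk]
    · show gRaw k (a * b) = fRaw k a • gRaw k b + MulOpposite.op (fRaw k b) • gRaw k a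
      rw [smul_eq_mul, op_smul_eq_mul]
      ext n
      rw [map_add, PowerSeries.coeff_mul, PowerSeries.coeff_mul]
      simp only [gRaw, fRaw, PowerSeries.coeff_mk, MvPowerSeries.coeff_mul]
      rw [sum_antidiagonal_ee n 1 (fun d₁ d₂ => (coeff d₁) a * (coeff d₂) b)]
      rw [← Finset.sum_add_distrib]
      refine Finset.sum_congr rfl ?_
      rintro ⟨a₁, a₂⟩ _
      have h1 : (Finset.HasAntidiagonal.antidiagonal 1 : Finset (ℕ × ℕ)) = {(0,1),(1,0)} := rfl
      rw [h1]
      simp [PowerSeries.coeff_mk, mul_comm]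
  map_zero' := by
    refine TrivSqZeroExt.ext ?_ ?_
    · show fRaw k 0 = 0
      ext n; simp [fRaw]
    · show gRaw k 0 = 0
      ext n; simp [gRaw]
  map_add' a b := by
    refine TrivSqZeroExt.ext ?_ ?_
    · show fRaw k (a + b) = fRaw k a + fRaw k b
      ext n; simp [fRaw]
    · show gRaw k (a + b) = gRaw k a + gRaw k b
      ext n; simp [gRaw]

lemma fst_Phi0 (h : MvPowerSeries (Fin 2) k) : (Phi0 k h).fst = fRaw k h := rfl
lemma snd_Phi0 (h : MvPowerSeries (Fin 2) k) : (Phi0 k h).snd = gRaw k h := rfl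

/-! ### The kernel -/

lemma mem_span_iff (h : MvPowerSeries (Fin 2) k) :
    h ∈ Ideal.span {(X 1 : MvPowerSeries (Fin 2) k) ^ 2} ↔
      ∀ d : Fin 2 →₀ ℕ, d 1 ≤ 1 → MvPowerSeries.coeff d h = 0 := by
  constructor
  · intro hh d hd
    rw [Ideal.mem_span_singleton] at hh
    obtain ⟨t, rfl⟩ := hh
    rw [X_pow_eq, MvPowerSeries.coeff_monomial_mul]
    rw [if_neg]
    intro hle
    have : (2 : ℕ) ≤ d 1 := by
      have := Finsupp.single_le_iff.mp hle
      exact this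
    omega
  · intro hcoeff
    rw [Ideal.mem_span_singleton]
    refine ⟨id (α := MvPowerSeries (Fin 2) k) fun d => MvPowerSeries.coeff (d + Finsupp.single 1 2) h, ?_⟩
    ext d
    rw [X_pow_eq, MvPowerSeries.coeff_monomial_mul]
    by_cases hle : Finsupp.single 1 2 ≤ d
    · rw [if_pos hle, one_mul]
      have : MvPowerSeries.coeff (d - Finsupp.single 1 2 + Finsupp.single 1 2) h =
          MvPowerSeries.coeff d h := by
        rw [tsub_add_cancel_of_le hle]
      exact this.symm
    · rw [if_neg hle]
      have hd1 : d 1 ≤ 1 := by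
        by_contra hc
        exact hle (Finsupp.single_le_iff.mpr (by omega))
      exact hcoeff d hd1

/-- The induced map `S →+* T[ε]`. -/
def Phi : Sring k →+* E k :=
  Ideal.Quotient.lift _ (Phi0 k) (by
    intro a ha
    rw [mem_span_iff] at ha
    refine TrivSqZeroExt.ext ?_ ?_
    · show fRaw k a = 0
      ext n
      simp only [fRaw, PowerSeries.coeff_mk]
      rw [ha (ee n 0) (by simp [ee_apply1])]
      simp
    · show gRaw k a = 0
      ext n
      simp only [gRaw, PowerSeries.coeff_mk]
      rw [ha (ee n 1) (by simp [ee_apply1])]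
      simp)

lemma Phi_mk (h : MvPowerSeries (Fin 2) k) :
    Phi k (Ideal.Quotient.mk _ h) = Phi0 k h :=
  Ideal.Quotient.lift_mk _ _ _

lemma Phi_inj {z : Sring k} (hz : Phi k z = 0) : z = 0 := by
  obtain ⟨h, rfl⟩ := Ideal.Quotient.mk_surjective z
  rw [Phi_mk] at hz
  have hf : fRaw k h = 0 := by
    have := congrArg TrivSqZeroExt.fst hz; simpa [fst_Phi0] using this
  have hg : gRaw k h = 0 := by
    have := congrArg TrivSqZeroExt.snd hz; simpa [snd_Phi0] using this
  rw [Ideal.Quotient.eq_zero_iff_mem, mem_span_iff]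
  intro d hd
  rcases Nat.le_one_iff_eq_zero_or_eq_one.mp hd with hd1 | hd1
  · have h0 : MvPowerSeries.coeff (ee (d 0) 0) h = 0 := by
      have := congrArg (fun p => PowerSeries.coeff (d 0) p) hf
      simpa [fRaw, PowerSeries.coeff_mk] using this
    rw [← ee_eq d, hd1]; exact h0
  · have h0 : MvPowerSeries.coeff (ee (d 0) 1) h = 0 := by
      have := congrArg (fun p => PowerSeries.coeff (d 0) p) hg
      simpa [gRaw, PowerSeries.coeff_mk] using this
    rw [← ee_eq d, hd1]; exact h0

/-! ### `f` and `g` -/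

def fS (z : Sring k) : PowerSeries k := (Phi k z).fst
def gS (z : Sring k) : PowerSeries k := (Phi k z).snd

lemma eq_zero_of_fg {z : Sring k} (hf : fS k z = 0) (hg : gS k z = 0) : z = 0 :=
  Phi_inj k (TrivSqZeroExt.ext hf hg)

lemma fS_mul (a b : Sring k) : fS k (a * b) = fS k a * fS k b := by
  simp [fS, map_mul]

lemma gS_mul (a b : Sring k) : gS k (a * b) = fS k a * gS k b + gS k a * fS k b := by
  simp only [gS, fS, map_mul, TrivSqZeroExt.snd_mul]
  rw [smul_eq_mul, op_smul_eq_mul]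

lemma fS_add (a b : Sring k) : fS k (a + b) = fS k a + fS k b := by simp [fS, map_add]
lemma gS_add (a b : Sring k) : gS k (a + b) = gS k a + gS k b := by simp [gS, map_add]
lemma fS_one : fS k 1 = 1 := by simp [fS, map_one]
lemma gS_one : gS k 1 = 0 := by simp [gS, map_one]
lemma fS_zero : fS k 0 = 0 := by simp [fS]
lemma gS_zero : gS k 0 = 0 := by simp [gS]

lemma fRaw_X0 : fRaw k (X 0) = PowerSeries.X := by
  ext n
  simp only [fRaw, PowerSeries.coeff_mk]
  rw [MvPowerSeries.coeff_X, PowerSeries.coeff_X]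
  have : ee n 0 = Finsupp.single (0 : Fin 2) 1 ↔ n = 1 := by
    constructor
    · intro h
      have := congrArg (fun f => f (0 : Fin 2)) h
      simpa [ee_apply0, Finsupp.single_apply] using this
    · rintro rfl
      ext i
      fin_cases i
      · simp [ee_apply0]
      · simp [ee_apply1, Finsupp.single_apply]
  simp [this]

lemma gRaw_X0 : gRaw k (X 0) = 0 := by
  ext n
  simp only [gRaw, PowerSeries.coeff_mk]
  rw [MvPowerSeries.coeff_X]
  rw [if_neg, map_zero]
  intro h
  have := congrArg (fun f => f (1 : Fin 2)) h
  simp [ee_apply1, Finsupp.single_apply] at this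

lemma fRaw_X1 : fRaw k (X 1) = 0 := by
  ext n
  simp only [fRaw, PowerSeries.coeff_mk]
  rw [MvPowerSeries.coeff_X]
  rw [if_neg, map_zero]
  intro h
  have := congrArg (fun f => f (1 : Fin 2)) h
  simp [ee_apply1, Finsupp.single_apply] at this

lemma gRaw_X1 : gRaw k (X 1) = 1 := by
  ext n
  simp only [gRaw, PowerSeries.coeff_mk]
  rw [MvPowerSeries.coeff_X, PowerSeries.coeff_one]
  have : ee n 1 = Finsupp.single (1 : Fin 2) 1 ↔ n = 0 := by
    constructor
    · intro h
      have := congrArg (fun f => f (0 : Fin 2)) h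
      simpa [ee_apply0, Finsupp.single_apply] using this
    · rintro rfl
      ext i
      fin_cases i
      · simp [ee_apply0, Finsupp.single_apply]
      · simp [ee_apply1, Finsupp.single_apply]
  simp [this]

lemma fS_Sx : fS k (Sx k) = PowerSeries.X := by
  simp only [fS, Sx, Phi_mk, fst_Phi0, fRaw_X0]

lemma gS_Sx : gS k (Sx k) = 0 := by
  simp only [gS, Sx, Phi_mk, snd_Phi0, gRaw_X0]

lemma fS_Su : fS k (Su k) = 0 := by
  simp only [fS, Su, Phi_mk, fst_Phi0, fRaw_X1]

lemma gS_Su : gS k (Su k) = 1 := by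
  simp only [gS, Su, Phi_mk, snd_Phi0, gRaw_X1]

lemma fS_Sx_pow (i : ℕ) : fS k (Sx k ^ i) = PowerSeries.X ^ i := by
  induction i with
  | zero => simpa using fS_one k
  | succ n ih => rw [pow_succ, fS_mul, ih, fS_Sx, pow_succ]

lemma gS_Sx_pow (i : ℕ) : gS k (Sx k ^ i) = 0 := by
  induction i with
  | zero => simpa using gS_one k
  | succ n ih => rw [pow_succ, gS_mul, ih, gS_Sx]; simp

/-! ### A section of `f` -/

def cS (t : PowerSeries k) : Sring k :=
  Ideal.Quotient.mk _ (id (α := MvPowerSeries (Fin 2) k) fun d => if d 1 = 0 then PowerSeries.coeff (d 0) t else 0)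

lemma fS_cS (t : PowerSeries k) : fS k (cS k t) = t := by
  ext n
  simp only [fS, cS, Phi_mk, fst_Phi0, fRaw, PowerSeries.coeff_mk]
  rw [MvPowerSeries.coeff_apply]
  simp [id, ee_apply0, ee_apply1]

lemma gS_cS (t : PowerSeries k) : gS k (cS k t) = 0 := by
  ext n
  simp only [gS, cS, Phi_mk, snd_Phi0, gRaw, PowerSeries.coeff_mk]
  rw [MvPowerSeries.coeff_apply]
  simp [id, ee_apply1]

/-! ### Basic consequences in `S` -/

lemma Su_ne_zero : Su k ≠ 0 := by
  intro h
  have := gS_Su k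
  rw [h, gS_zero] at this
  exact one_ne_zero this.symm

lemma usq : Su k * Su k = 0 := by
  apply eq_zero_of_fg
  · rw [fS_mul, fS_Su, mul_zero]
  · rw [gS_mul, fS_Su, gS_Su]; ring

lemma umul_eq_zero_iff (z : Sring k) : Su k * z = 0 ↔ fS k z = 0 := by
  constructor
  · intro h
    have : gS k (Su k * z) = fS k z := by
      rw [gS_mul, fS_Su, gS_Su, zero_mul, one_mul, zero_add]
    rw [h, gS_zero] at this
    exact this.symm
  · intro h
    apply eq_zero_of_fg
    · rw [fS_mul, fS_Su, zero_mul]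
    · rw [gS_mul, fS_Su, gS_Su, zero_mul, one_mul, zero_add, h]


def fSh : Sring k →+* PowerSeries k where
  toFun := fS k
  map_one' := fS_one k
  map_mul' := fS_mul k
  map_zero' := fS_zero k
  map_add' := fS_add k

def gSh : Sring k →+ PowerSeries k where
  toFun := gS k
  map_zero' := gS_zero k
  map_add' := gS_add k

lemma fS_sub (a b : Sring k) : fS k (a - b) = fS k a - fS k b := map_sub (fSh k) a b
lemma gS_sub (a b : Sring k) : gS k (a - b) = gS k a - gS k b := map_sub (gSh k) a b

lemma umul_factor {z : Sring k} (h : Su k * z = 0) : ∃ c, z = Su k * c := by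
  refine ⟨cS k (gS k z), ?_⟩
  have h1 : fS k z = 0 := (umul_eq_zero_iff k z).mp h
  have hsub : z - Su k * cS k (gS k z) = 0 := by
    apply eq_zero_of_fg
    · rw [fS_sub, h1, fS_mul, fS_Su, zero_mul, sub_zero]
    · rw [gS_sub, gS_mul, fS_Su, gS_Su, zero_mul, one_mul, zero_add, fS_cS, sub_self]
  exact sub_eq_zero.mp hsub

/-! ### Uniformity -/

lemma exists_umul_mem (N : Submodule (Sring k) (Sring k)) (hN : N ≠ ⊥) :
    ∃ a : Sring k, Su k * a ∈ N ∧ Su k * a ≠ 0 := by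
  obtain ⟨z, hzN, hz⟩ := (Submodule.ne_bot_iff N).mp hN
  by_cases h : Su k * z = 0
  · obtain ⟨c, rfl⟩ := umul_factor k h
    exact ⟨c, hzN, hz⟩
  · refine ⟨z, ?_, h⟩
    simpa [smul_eq_mul] using N.smul_mem (Su k) hzN

lemma uniform (N₁ N₂ : Submodule (Sring k) (Sring k)) (h₁ : N₁ ≠ ⊥) (h₂ : N₂ ≠ ⊥) :
    ¬ Disjoint N₁ N₂ := by
  obtain ⟨a₁, ha₁N, ha₁⟩ := exists_umul_mem k N₁ h₁
  obtain ⟨a₂, ha₂N, ha₂⟩ := exists_umul_mem k N₂ h₂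
  intro hdis
  have hw1 : Su k * (a₁ * a₂) ∈ N₁ := by
    have := N₁.smul_mem a₂ ha₁N
    have heq : a₂ • (Su k * a₁) = Su k * (a₁ * a₂) := by rw [smul_eq_mul]; ring
    rwa [heq] at this
  have hw2 : Su k * (a₁ * a₂) ∈ N₂ := by
    have := N₂.smul_mem a₁ ha₂N
    have heq : a₁ • (Su k * a₂) = Su k * (a₁ * a₂) := by rw [smul_eq_mul]; ring
    rwa [heq] at this
  have hw0 : Su k * (a₁ * a₂) ≠ 0 := by
    rw [Ne, umul_eq_zero_iff] at ha₁ ha₂ ⊢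
    rw [fS_mul]
    exact mul_ne_zero ha₁ ha₂
  exact hw0 (Submodule.disjoint_def.mp hdis _ hw1 hw2)

/-! ### The ideals -/

lemma Xideal_coe (i : ℕ) : Xideal k (i : ℕ∞) = Ideal.span {Sx k ^ i, Su k} := rfl
lemma Xideal_top : Xideal k ⊤ = Ideal.span {Su k} := rfl

lemma Su_mem_Xideal (i : ℕ∞) : Su k ∈ Xideal k i := by
  induction i using WithTop.recTopCoe with
  | top => exact Ideal.subset_span rfl
  | coe i => exact Ideal.subset_span (Set.mem_insert_of_mem _ rfl)

lemma Sxpow_mem_Xideal (i : ℕ) : Sx k ^ i ∈ Xideal k (i : ℕ∞) :=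
  Ideal.subset_span (Set.mem_insert _ _)

/-! ### Indecomposability -/

lemma indecomposable (i : ℕ∞) : IsIndecomposableModule (Sring k) (Xideal k i) := by
  constructor
  · refine ⟨⟨Su k, Su_mem_Xideal k i⟩, fun h => Su_ne_zero k ?_⟩
    exact congrArg Subtype.val h
  · intro N₁ N₂ hc
    by_contra hboth
    push_neg at hboth
    obtain ⟨hb₁, hb₂⟩ := hboth
    have inj : Function.Injective ((Xideal k i).subtype) := Subtype.val_injective
    have h1 : N₁.map (Xideal k i).subtype ≠ ⊥ := by
      obtain ⟨z, hzN, hz⟩ := (Submodule.ne_bot_iff N₁).mp hb₁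
      refine (Submodule.ne_bot_iff _).mpr ⟨(z : Sring k), Submodule.mem_map_of_mem hzN, ?_⟩
      simpa using hz
    have h2 : N₂.map (Xideal k i).subtype ≠ ⊥ := by
      obtain ⟨z, hzN, hz⟩ := (Submodule.ne_bot_iff N₂).mp hb₂
      refine (Submodule.ne_bot_iff _).mpr ⟨(z : Sring k), Submodule.mem_map_of_mem hzN, ?_⟩
      simpa using hz
    have hdis : Disjoint (N₁.map (Xideal k i).subtype) (N₂.map (Xideal k i).subtype) := by
      rw [disjoint_iff, ← Submodule.map_inf _ inj, disjoint_iff.mp hc.disjoint,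
        Submodule.map_bot]
    exact uniform k _ _ h1 h2 hdis

/-! ### Non-isomorphism -/

set_option maxHeartbeats 1000000 in
lemma keyTop (i : ℕ) (φ : (Xideal k (i : ℕ∞)) ≃ₗ[Sring k] (Xideal k (⊤ : ℕ∞))) : False := by
  have hGmem : Sx k ^ i ∈ Xideal k (i : ℕ∞) := Sxpow_mem_Xideal k i
  set G : Xideal k (i : ℕ∞) := ⟨Sx k ^ i, hGmem⟩ with hGdef
  have hmem : (φ G : Sring k) ∈ Ideal.span {Su k} := (φ G).2
  obtain ⟨a, ha⟩ := Ideal.mem_span_singleton'.mp hmem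
  have h1 : Su k • φ G = 0 := by
    apply Subtype.ext
    show Su k * (φ G : Sring k) = 0
    rw [← ha]
    calc Su k * (a * Su k) = a * (Su k * Su k) := by ring
      _ = 0 := by rw [usq, mul_zero]
  have h3 : Su k • G = 0 := by
    apply φ.injective
    rw [map_smul, h1, map_zero]
  have h4 : Su k * Sx k ^ i = 0 := congrArg Subtype.val h3
  rw [umul_eq_zero_iff, fS_Sx_pow] at h4
  exact pow_ne_zero i PowerSeries.X_ne_zero h4

set_option maxHeartbeats 1000000 in
lemma keyFin (i j : ℕ) (hij' : i < j)
    (φ : (Xideal k (i : ℕ∞)) ≃ₗ[Sring k] (Xideal k (j : ℕ∞))) : False := by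
  have hGmem : Sx k ^ i ∈ Xideal k (i : ℕ∞) := Sxpow_mem_Xideal k i
  set W : Xideal k (i : ℕ∞) := ⟨Su k, Su_mem_Xideal k _⟩ with hWdef
  set G : Xideal k (i : ℕ∞) := ⟨Sx k ^ i, hGmem⟩ with hGdef
  have hW0 : Su k • W = 0 := by
    apply Subtype.ext
    show Su k * Su k = 0
    exact usq k
  -- the relation u•G = x^i•W and its image
  have hrel : Su k • G = (Sx k ^ i) • W := by
    apply Subtype.ext
    show Su k * Sx k ^ i = Sx k ^ i * Su k
    ring
  have hstar : Su k * (φ G : Sring k) = Sx k ^ i * (φ W : Sring k) := by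
    have h := congrArg φ hrel
    rw [map_smul, map_smul] at h
    have := congrArg Subtype.val h
    simpa [smul_eq_mul] using this
  -- u * (φ W) = 0
  have hCu : Su k * (φ W : Sring k) = 0 := by
    have h := congrArg φ hW0
    rw [map_smul, map_zero] at h
    have := congrArg Subtype.val h
    simpa [smul_eq_mul] using this
  obtain ⟨c, hc⟩ := umul_factor k hCu
  -- φ G as a combination of the generators of X_j
  have hmemA : (φ G : Sring k) ∈ Ideal.span {Sx k ^ j, Su k} := (φ G).2
  obtain ⟨p, q, hpq⟩ := Ideal.mem_span_pair.mp hmemA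
  -- surjectivity onto u ∈ X_j
  have hWQmem : Su k ∈ Xideal k (j : ℕ∞) := Su_mem_Xideal k _
  have hzmem : ((φ.symm ⟨Su k, hWQmem⟩ : Xideal k (i : ℕ∞)) : Sring k) ∈
      Ideal.span {Sx k ^ i, Su k} := (φ.symm ⟨Su k, hWQmem⟩).2
  obtain ⟨α, β, hz⟩ := Ideal.mem_span_pair.mp hzmem
  have hzdecomp : φ.symm ⟨Su k, hWQmem⟩ = α • G + β • W := by
    apply Subtype.ext
    simp only [Submodule.coe_add, SetLike.val_smul, smul_eq_mul]
    exact hz.symm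
  have hsurj : Su k = α * (φ G : Sring k) + β * (φ W : Sring k) := by
    have h := congrArg φ hzdecomp
    rw [LinearEquiv.apply_symm_apply, map_add, map_smul, map_smul] at h
    have := congrArg Subtype.val h
    simpa [smul_eq_mul] using this
  -- power series computations
  have hfC : fS k (φ W : Sring k) = 0 := by rw [hc, fS_mul, fS_Su, zero_mul]
  have hgC : gS k (φ W : Sring k) = fS k c := by
    rw [hc, gS_mul, fS_Su, gS_Su, zero_mul, one_mul, zero_add]
  have hfA : fS k (φ G : Sring k) = fS k p * PowerSeries.X ^ j := by
    rw [← hpq, fS_add, fS_mul, fS_mul, fS_Su, fS_Sx_pow, mul_zero, add_zero]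
  have hI : fS k (φ G : Sring k) = PowerSeries.X ^ i * fS k c := by
    have h1 : gS k (Su k * (φ G : Sring k)) = fS k (φ G : Sring k) := by
      rw [gS_mul, fS_Su, gS_Su, zero_mul, one_mul, zero_add]
    have h2 : gS k (Sx k ^ i * (φ W : Sring k)) = PowerSeries.X ^ i * gS k (φ W : Sring k) := by
      rw [gS_mul, gS_Sx_pow, fS_Sx_pow, zero_mul, add_zero]
    rw [← h1, hstar, h2, hgC]
  have hXi : (PowerSeries.X : PowerSeries k) ^ i ≠ 0 := pow_ne_zero _ PowerSeries.X_ne_zero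
  have hXj : (PowerSeries.X : PowerSeries k) ^ j ≠ 0 := pow_ne_zero _ PowerSeries.X_ne_zero
  have hVI : fS k c = fS k p * PowerSeries.X ^ (j - i) := by
    apply mul_left_cancel₀ hXi
    have hsplit : (PowerSeries.X : PowerSeries k) ^ j =
        PowerSeries.X ^ i * PowerSeries.X ^ (j - i) := by
      rw [← pow_add]; congr 1; omega
    rw [← hI, hfA, hsplit]
    ring
  have hII : fS k α * fS k p = 0 := by
    have h := congrArg (fS k) hsurj
    rw [fS_Su, fS_add, fS_mul, fS_mul, hfC, mul_zero, add_zero, hfA] at h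
    have h' : fS k α * fS k p * PowerSeries.X ^ j = 0 := by rw [mul_assoc, ← h]
    exact (mul_eq_zero.mp h').resolve_right hXj
  rcases mul_eq_zero.mp hII with hα | hp
  · -- fα = 0 : constant-coefficient contradiction
    have h := congrArg (gS k) hsurj
    rw [gS_Su, gS_add, gS_mul, gS_mul, hα, zero_mul, zero_add, hfA, hgC, hfC,
      mul_zero, add_zero, hVI] at h
    have hcc := congrArg (PowerSeries.constantCoeff) h
    rw [map_one, map_add, map_mul, map_mul, map_mul, map_mul, map_pow, map_pow,
      PowerSeries.constantCoeff_X, zero_pow (by omega : j ≠ 0),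
      zero_pow (by omega : j - i ≠ 0)] at hcc
    simp at hcc
  · -- fp = 0 : then φ W = 0, contradicting injectivity
    have hfc : fS k c = 0 := by rw [hVI, hp, zero_mul]
    have hC0 : (φ W : Sring k) = 0 := eq_zero_of_fg k hfC (by rw [hgC, hfc])
    have hφW : φ W = 0 := Subtype.ext hC0
    have hW : W = 0 := by
      apply φ.injective
      rw [hφW, map_zero]
    exact Su_ne_zero k (congrArg Subtype.val hW)

end AInf
end AInfSec

/-- Let `k` be a field and `S = k[[x,u]]/(u²)`.  For `i ∈ ℕ` let `X_i` be the
ideal `(x^i, u)` of `S` (so `X_0 = S`) and let `X_∞ = (u)`.  Then each `X_i` with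
`i ∈ ℕ ∪ {∞}` is an indecomposable `S`-module, and `X_i ≇ X_j` for `i ≠ j` in `ℕ ∪ {∞}`. -/
theorem Xideal_indecomposable_and_pairwise_nonisomorphic (k : Type*) [Field k] :
    (∀ i : ℕ∞, IsIndecomposableModule (Sring k) (Xideal k i)) ∧
    (∀ i j : ℕ∞, i ≠ j → IsEmpty ((Xideal k i) ≃ₗ[Sring k] (Xideal k j))) := by
  constructor
  · exact AInf.indecomposable k
  · intro i j hij
    constructor
    intro φ
    rcases hij.lt_or_gt with h | h
    · induction i using ENat.recTopCoe with
      | top => exact absurd h (not_top_lt)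
      | coe i' =>
        induction j using ENat.recTopCoe with
        | top => exact AInf.keyTop k i' φ
        | coe j' => exact AInf.keyFin k i' j' (by exact_mod_cast h) φ
    · induction j using ENat.recTopCoe with
      | top => exact absurd h (not_top_lt)
      | coe j' =>
        induction i using ENat.recTopCoe with
        | top => exact AInf.keyTop k j' φ.symm
        | coe i' => exact AInf.keyFin k j' i' (by exact_mod_cast h) φ.symm
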